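/- Let A₀, A₁ be real symmetric n×n matrices and β₀, β₁ ∈ ℝ. Suppose there exists x̄ ∈ ℝⁿ with x̄ᵀA₁x̄ < β₁. Then the implication (xᵀA₁x ≤ β₁ ⟹ xᵀA₀x ≥ β₀ for all x ∈ ℝⁿ) holds if and only if there exists t ≥ 0 such that A₀ + tA₁ is positive semidefinite and β₀ + tβ₁ ≤ 0. -/

import Mathlib

open Matrix

def qf {n : ℕ} (M : Matrix (Fin n) (Fin n) ℝ) (x : Fin n → ℝ) : ℝ := x ⬝ᵥ M *ᵥ x

lemma qf_def2 {n : ℕ} (M : Matrix (Fin n) (Fin n) ℝ) (x : Fin n → ℝ) :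
    qf M x = x ⬝ᵥ M *ᵥ x := rfl

lemma qf_smul {n : ℕ} (M : Matrix (Fin n) (Fin n) ℝ) (s : ℝ) (x : Fin n → ℝ) :
    qf M (s • x) = s ^ 2 * qf M x := by
  simp [qf, mulVec_smul, dotProduct_smul, smul_dotProduct, smul_eq_mul]
  ring

lemma qf_expand {n : ℕ} (M : Matrix (Fin n) (Fin n) ℝ) (a b : ℝ) (x y : Fin n → ℝ) :
    qf M (a • x + b • y) = a ^ 2 * qf M x + (a * b) * (x ⬝ᵥ M *ᵥ y + y ⬝ᵥ M *ᵥ x)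
      + b ^ 2 * qf M y := by
  simp [qf, mulVec_add, mulVec_smul, dotProduct_add, add_dotProduct, dotProduct_smul,
    smul_dotProduct, smul_eq_mul]
  ring

lemma qf_lin {n : ℕ} (A B : Matrix (Fin n) (Fin n) ℝ) (a b : ℝ) (x : Fin n → ℝ) :
    qf (a • A + b • B) x = a * qf A x + b * qf B x := by
  simp [qf, add_mulVec, smul_mulVec, dotProduct_add, dotProduct_smul, smul_eq_mul]

lemma qf_zero {n : ℕ} (M : Matrix (Fin n) (Fin n) ℝ) : qf M 0 = 0 := by
  simp [qf]

lemma comb_bounds (r s l1 l2 : ℝ) (h1 : 0 ≤ l1) (h2 : 0 ≤ l2) (hs : l1 + l2 = 1) :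
    min r s ≤ l1 * r + l2 * s ∧ l1 * r + l2 * s ≤ max r s := by
  constructor
  · rcases le_total r s with h | h
    · rw [min_eq_left h]
      have key : l1 * r + l2 * s = r + l2 * (s - r) := by linear_combination r * hs
      linarith [mul_nonneg h2 (sub_nonneg.2 h)]
    · rw [min_eq_right h]
      have key : l1 * r + l2 * s = s + l1 * (r - s) := by linear_combination s * hs
      linarith [mul_nonneg h1 (sub_nonneg.2 h)]
  · rcases le_total r s with h | h
    · rw [max_eq_right h]
      have key : l1 * r + l2 * s = s - l1 * (s - r) := by linear_combination s * hs
      linarith [mul_nonneg h1 (sub_nonneg.2 h)]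
    · rw [max_eq_left h]
      have key : l1 * r + l2 * s = r - l2 * (r - s) := by linear_combination r * hs
      linarith [mul_nonneg h2 (sub_nonneg.2 h)]

/-- helper for the γ = 0 case: hitting a value on a null direction -/
lemma null_scale {n : ℕ} (M N : Matrix (Fin n) (Fin n) ℝ) (w : Fin n → ℝ) (ρ : ℝ)
    (hM : qf M w = 0) (h : (qf N w ≤ ρ ∧ ρ ≤ 0) ∨ (0 ≤ ρ ∧ ρ ≤ qf N w)) :
    ∃ z : Fin n → ℝ, qf M z = 0 ∧ qf N z = ρ := by
  by_cases hw : qf N w = 0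
  · refine ⟨0, qf_zero M, ?_⟩
    rw [qf_zero]
    rcases h with ⟨h1, h2⟩ | ⟨h1, h2⟩ <;> rw [hw] at * <;> linarith
  · have hc : 0 ≤ ρ / qf N w := by
      rw [div_nonneg_iff]
      rcases h with ⟨h1, h2⟩ | ⟨h1, h2⟩
      · exact Or.inr ⟨h2, by linarith⟩
      · exact Or.inl ⟨h1, by linarith⟩
    refine ⟨Real.sqrt (ρ / qf N w) • w, ?_, ?_⟩
    · rw [qf_smul, hM, mul_zero]
    · rw [qf_smul, Real.sq_sqrt hc, div_mul_cancel₀ _ hw]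

/-- the IVT step for γ ≠ 0 -/
lemma ivt_step {n : ℕ} (M N : Matrix (Fin n) (Fin n) ℝ) (x y : Fin n → ℝ) (γ ρ : ℝ)
    (hγ : γ ≠ 0) (hqx : qf M x = γ) (hqy : qf M y = γ)
    (hρ1 : min (qf N x) (qf N y) ≤ ρ) (hρ2 : ρ ≤ max (qf N x) (qf N y)) :
    ∃ z : Fin n → ℝ, qf M z = γ ∧ qf N z = ρ := by
  set cq : ℝ := x ⬝ᵥ M *ᵥ y + y ⬝ᵥ M *ᵥ x with hcq
  set cr : ℝ := x ⬝ᵥ N *ᵥ y + y ⬝ᵥ N *ᵥ x with hcr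
  obtain ⟨σ, hσ2, hσpos⟩ : ∃ σ : ℝ, σ ^ 2 = 1 ∧ 0 ≤ σ * (cq * γ) := by
    rcases le_total 0 (cq * γ) with h | h
    · exact ⟨1, by norm_num, by linarith⟩
    · exact ⟨-1, by norm_num, by nlinarith⟩
  set den : ℝ → ℝ := fun τ => (1 - τ) ^ 2 * γ + ((1 - τ) * (σ * τ)) * cq + (σ * τ) ^ 2 * γ
    with hden
  set num : ℝ → ℝ := fun τ => (1 - τ) ^ 2 * qf N x + ((1 - τ) * (σ * τ)) * cr
    + (σ * τ) ^ 2 * qf N y with hnum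
  have hγ2 : 0 < γ ^ 2 := by positivity
  have hdenpos : ∀ τ ∈ Set.uIcc (0:ℝ) 1, 0 < γ * den τ := by
    intro τ hτ
    rw [Set.uIcc_of_le zero_le_one, Set.mem_Icc] at hτ
    obtain ⟨hτ0, hτ1⟩ := hτ
    have h1 : 0 ≤ (1 - τ) * τ * (σ * (cq * γ)) :=
      mul_nonneg (mul_nonneg (by linarith) hτ0) hσpos
    have expand : γ * den τ = ((1 - τ) ^ 2 + τ ^ 2 * σ ^ 2) * γ ^ 2
        + (1 - τ) * τ * (σ * (cq * γ)) := by rw [hden]; ring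
    rw [expand, hσ2]
    nlinarith [sq_nonneg (1 - 2 * τ)]
  have hdenne : ∀ τ ∈ Set.uIcc (0:ℝ) 1, den τ ≠ 0 := by
    intro τ hτ h
    have := hdenpos τ hτ
    rw [h, mul_zero] at this
    exact lt_irrefl 0 this
  set φ : ℝ → ℝ := fun τ => γ * num τ / den τ with hφ
  have hcont : ContinuousOn φ (Set.uIcc (0:ℝ) 1) := by
    apply ContinuousOn.div
    · fun_prop
    · fun_prop
    · exact hdenne
  have hφ0 : φ 0 = qf N x := by
    simp only [hφ, hnum, hden]
    norm_num
    rw [mul_comm, mul_div_assoc, div_self hγ, mul_one]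
  have hφ1 : φ 1 = qf N y := by
    simp only [hφ, hnum, hden]
    norm_num
    rw [hσ2]
    rw [one_mul, one_mul, mul_comm, mul_div_assoc, div_self hγ, mul_one]
  have hρmem : ρ ∈ Set.uIcc (φ 0) (φ 1) := by
    rw [hφ0, hφ1, Set.uIcc, Set.mem_Icc]
    exact ⟨hρ1, hρ2⟩
  obtain ⟨τ, hτmem, hτval⟩ := intermediate_value_uIcc hcont hρmem
  have hqw : qf M ((1 - τ) • x + (σ * τ) • y) = den τ := by
    rw [qf_expand, hqx, hqy, ← hcq, hden]
  have hrw : qf N ((1 - τ) • x + (σ * τ) • y) = num τ := by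
    rw [qf_expand, ← hcr, hnum]
  have hdpos : 0 < γ * den τ := hdenpos τ hτmem
  have hdne : den τ ≠ 0 := hdenne τ hτmem
  have hfrac : 0 ≤ γ / den τ := by
    rcases lt_trichotomy (den τ) 0 with h | h | h
    · have : γ < 0 := by nlinarith
      exact le_of_lt (div_pos_of_neg_of_neg this h)
    · exact absurd h hdne
    · have : 0 < γ := by nlinarith
      exact le_of_lt (div_pos this h)
  refine ⟨Real.sqrt (γ / den τ) • ((1 - τ) • x + (σ * τ) • y), ?_, ?_⟩
  · rw [qf_smul, Real.sq_sqrt hfrac, hqw, div_mul_cancel₀ _ hdne]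
  · rw [qf_smul, Real.sq_sqrt hfrac, hrw, ← hτval, hφ]
    field_simp
lemma dines {n : ℕ} (A B : Matrix (Fin n) (Fin n) ℝ) :
    Convex ℝ {p : ℝ × ℝ | ∃ x : Fin n → ℝ, p = (qf A x, qf B x)} := by
  rintro u ⟨x, rfl⟩ v ⟨y, rfl⟩ l1 l2 hl1 hl2 hsum
  have hcomb : (l1 • (qf A x, qf B x) + l2 • (qf A y, qf B y) : ℝ × ℝ)
      = (l1 * qf A x + l2 * qf A y, l1 * qf B x + l2 * qf B y) := by
    simp [Prod.ext_iff, smul_eq_mul]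
  by_cases huv : qf A x = qf A y ∧ qf B x = qf B y
  · refine ⟨x, ?_⟩
    rw [hcomb, Prod.ext_iff]
    constructor
    · simp only
      linear_combination (qf A x) * hsum + l2 * huv.1.symm
    · simp only
      linear_combination (qf B x) * hsum + l2 * huv.2.symm
  · have hab : qf B y - qf B x ≠ 0 ∨ qf A x - qf A y ≠ 0 := by
      by_contra hcon
      push_neg at hcon
      exact huv ⟨by linarith [sub_eq_zero.mp hcon.2], by linarith [sub_eq_zero.mp hcon.1]⟩
    obtain ⟨a, b, ha, hb⟩ : ∃ a b : ℝ, a = qf B y - qf B x ∧ b = qf A x - qf A y :=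
      ⟨_, _, rfl, rfl⟩
    rw [← ha, ← hb] at hab
    obtain ⟨M, hM⟩ : ∃ M, M = a • A + b • B := ⟨_, rfl⟩
    obtain ⟨N, hN⟩ : ∃ N, N = (-b) • A + a • B := ⟨_, rfl⟩
    obtain ⟨γ, hγdef⟩ : ∃ γ : ℝ, γ = a * qf A x + b * qf B x := ⟨_, rfl⟩
    obtain ⟨ρ, hρdef⟩ : ∃ ρ : ℝ, ρ = l1 * qf N x + l2 * qf N y := ⟨_, rfl⟩
    have hqx : qf M x = γ := by rw [hM, qf_lin, hγdef]
    have hqy : qf M y = γ := by rw [hM, qf_lin, hγdef, ha, hb]; ring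
    have hnx : qf N x = (-b) * qf A x + a * qf B x := by rw [hN, qf_lin]
    have hny : qf N y = (-b) * qf A y + a * qf B y := by rw [hN, qf_lin]
    suffices hz : ∃ z : Fin n → ℝ, qf M z = γ ∧ qf N z = ρ by
      obtain ⟨z, hz1, hz2⟩ := hz
      refine ⟨z, ?_⟩
      have e1 : a * qf A z + b * qf B z = γ := by rw [← qf_lin A B a b z, ← hM]; exact hz1
      have e2 : (-b) * qf A z + a * qf B z = ρ := by rw [← qf_lin A B (-b) a z, ← hN]; exact hz2
      rw [hcomb, Prod.ext_iff]
      have hgy : a * qf A y + b * qf B y = γ := by rw [hγdef, ha, hb]; ring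
      have key1 : a * (l1 * qf A x + l2 * qf A y) + b * (l1 * qf B x + l2 * qf B y) = γ := by
        linear_combination (-l1) * hγdef + l2 * hgy + γ * hsum
      have key2 : (-b) * (l1 * qf A x + l2 * qf A y) + a * (l1 * qf B x + l2 * qf B y) = ρ := by
        linear_combination (-l1) * hnx + (-l2) * hny - hρdef
      have hA2 : 0 < a ^ 2 + b ^ 2 := by rcases hab with h | h <;> positivity
      constructor
      · simp only
        have d1 : (a ^ 2 + b ^ 2) * qf A z = (a ^ 2 + b ^ 2) * (l1 * qf A x + l2 * qf A y) := by
          linear_combination a * e1 - b * e2 - a * key1 + b * key2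
        exact (mul_left_cancel₀ (ne_of_gt hA2) d1).symm
      · simp only
        have d2 : (a ^ 2 + b ^ 2) * qf B z = (a ^ 2 + b ^ 2) * (l1 * qf B x + l2 * qf B y) := by
          linear_combination b * e1 + a * e2 - b * key1 - a * key2
        exact (mul_left_cancel₀ (ne_of_gt hA2) d2).symm
    obtain ⟨hb1, hb2⟩ := comb_bounds (qf N x) (qf N y) l1 l2 hl1 hl2 hsum
    rw [← hρdef] at hb1 hb2
    by_cases hγ : γ = 0
    · subst hγ
      rcases le_total ρ 0 with hρ | hρ
      · rcases le_total (qf N x) (qf N y) with h | h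
        · exact null_scale M N x ρ (by rw [hqx]) (Or.inl ⟨by rw [min_eq_left h] at hb1; exact hb1, hρ⟩)
        · exact null_scale M N y ρ (by rw [hqy]) (Or.inl ⟨by rw [min_eq_right h] at hb1; exact hb1, hρ⟩)
      · rcases le_total (qf N x) (qf N y) with h | h
        · exact null_scale M N y ρ (by rw [hqy]) (Or.inr ⟨hρ, by rw [max_eq_right h] at hb2; exact hb2⟩)
        · exact null_scale M N x ρ (by rw [hqx]) (Or.inr ⟨hρ, by rw [max_eq_left h] at hb2; exact hb2⟩)
    · exact ivt_step M N x y γ ρ hγ hqx hqy hb1 hb2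
theorem homogeneous_s_lemma (n : ℕ) (A₀ A₁ : Matrix (Fin n) (Fin n) ℝ)
    (h₀ : A₀.IsSymm) (h₁ : A₁.IsSymm) (β₀ β₁ : ℝ)
    (hslater : ∃ xbar : Fin n → ℝ, xbar ⬝ᵥ A₁ *ᵥ xbar < β₁) :
    (∀ x : Fin n → ℝ, x ⬝ᵥ A₁ *ᵥ x ≤ β₁ → β₀ ≤ x ⬝ᵥ A₀ *ᵥ x) ↔
    (∃ t : ℝ, 0 ≤ t ∧ (A₀ + t • A₁).PosSemidef ∧ β₀ + t * β₁ ≤ 0) := by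
  constructor
  · -- hard direction
    intro hC
    -- separation setup
    set D : Set (ℝ × ℝ) := {p : ℝ × ℝ | ∃ x : Fin n → ℝ, p = (qf A₀ x, qf A₁ x)} with hD
    set O : Set (ℝ × ℝ) := {p : ℝ × ℝ | p.1 < β₀} ∩ {p : ℝ × ℝ | p.2 < β₁} with hO
    have hO_open : IsOpen O :=
      ((isOpen_lt continuous_fst continuous_const).inter
        (isOpen_lt continuous_snd continuous_const))
    have hfst : IsLinearMap ℝ (fun p : ℝ × ℝ => p.1) := ⟨fun _ _ => rfl, fun _ _ => rfl⟩
    have hsnd : IsLinearMap ℝ (fun p : ℝ × ℝ => p.2) := ⟨fun _ _ => rfl, fun _ _ => rfl⟩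
    have hO_conv : Convex ℝ O :=
      (convex_halfSpace_lt hfst β₀).inter (convex_halfSpace_lt hsnd β₁)
    have hdisj : Disjoint O D := by
      rw [Set.disjoint_left]
      rintro p ⟨hp1, hp2⟩ ⟨x, rfl⟩
      simp only [Set.mem_setOf_eq, qf_def2] at hp1 hp2
      exact absurd (hC x (le_of_lt hp2)) (not_le.2 hp1)
    obtain ⟨f, u, hfO, hfD⟩ := geometric_hahn_banach_open hO_conv hO_open (dines A₀ A₁) hdisj
    set c₀ : ℝ := f (1, 0) with hc₀
    set c₁ : ℝ := f (0, 1) with hc₁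
    have hf : ∀ s t : ℝ, f (s, t) = s * c₀ + t * c₁ := by
      intro s t
      have : ((s, t) : ℝ × ℝ) = s • ((1:ℝ), (0:ℝ)) + t • ((0:ℝ), (1:ℝ)) := by
        simp [Prod.ext_iff]
      rw [this, map_add, f.map_smul, f.map_smul, smul_eq_mul, smul_eq_mul, hc₀, hc₁]
    have hD' : ∀ x : Fin n → ℝ, u ≤ qf A₀ x * c₀ + qf A₁ x * c₁ := by
      intro x
      have := hfD _ ⟨x, rfl⟩
      rwa [hf] at this
    have hO' : ∀ p₁ p₂ : ℝ, p₁ < β₀ → p₂ < β₁ → p₁ * c₀ + p₂ * c₁ < u := by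
      intro p₁ p₂ h1 h2
      have := hfO (p₁, p₂) ⟨h1, h2⟩
      rwa [hf] at this
    -- nonnegativity of coefficients
    have hc₀n : 0 ≤ c₀ := by
      by_contra h
      push_neg at h
      obtain ⟨ε, hε1, hε2⟩ : ∃ ε : ℝ, 1 ≤ ε ∧ (u + 1 - β₀ * c₀ - (β₁ - 1) * c₁) / (-c₀) ≤ ε :=
        ⟨max 1 _, le_max_left _ _, le_max_right _ _⟩
      have h2 := hO' (β₀ - ε) (β₁ - 1) (by linarith) (by linarith)
      rw [div_le_iff₀ (by linarith)] at hε2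
      nlinarith
    have hc₁n : 0 ≤ c₁ := by
      by_contra h
      push_neg at h
      obtain ⟨ε, hε1, hε2⟩ : ∃ ε : ℝ, 1 ≤ ε ∧ (u + 1 - (β₀ - 1) * c₀ - β₁ * c₁) / (-c₁) ≤ ε :=
        ⟨max 1 _, le_max_left _ _, le_max_right _ _⟩
      have h2 := hO' (β₀ - 1) (β₁ - ε) (by linarith) (by linarith)
      rw [div_le_iff₀ (by linarith)] at hε2
      nlinarith
    have hu0 : u ≤ 0 := by
      have := hD' 0
      rw [qf_zero, qf_zero] at this
      linarith
    have hkey : β₀ * c₀ + β₁ * c₁ ≤ u := by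
      by_contra h
      push_neg at h
      set ε : ℝ := (β₀ * c₀ + β₁ * c₁ - u) / (c₀ + c₁ + 1) with hε
      have hεpos : 0 < ε := div_pos (by linarith) (by linarith)
      have hεeq : ε * (c₀ + c₁ + 1) = β₀ * c₀ + β₁ * c₁ - u :=
        div_mul_cancel₀ _ (by positivity)
      have h2 := hO' (β₀ - ε) (β₁ - ε) (by linarith) (by linarith)
      nlinarith
    have hscale : ∀ x : Fin n → ℝ, 0 ≤ qf A₀ x * c₀ + qf A₁ x * c₁ := by
      intro x
      by_contra h
      push_neg at h
      set T : ℝ := qf A₀ x * c₀ + qf A₁ x * c₁ with hT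
      have hTne : T ≠ 0 := ne_of_lt h
      have hrat : 0 ≤ (u - 1) / T := by
        rw [div_nonneg_iff]
        exact Or.inr ⟨by linarith, le_of_lt h⟩
      have h2 := hD' (Real.sqrt ((u - 1) / T) • x)
      rw [qf_smul, qf_smul, Real.sq_sqrt hrat] at h2
      have h3 : (u - 1) / T * qf A₀ x * c₀ + (u - 1) / T * qf A₁ x * c₁
          = (u - 1) / T * T := by rw [hT]; ring
      rw [div_mul_cancel₀ _ hTne] at h3
      nlinarith
    have hc₀pos : 0 < c₀ := by
      rcases hc₀n.lt_or_eq with h | h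
      · exact h
      · exfalso
        rcases hc₁n.lt_or_eq with h1 | h1
        · obtain ⟨xbar, hxbar⟩ := hslater
          have := hD' xbar
          rw [← h, qf_def2, qf_def2] at this
          rw [← h] at hkey
          nlinarith [mul_pos h1 (sub_pos.2 hxbar)]
        · have := hO' (β₀ - 1) (β₁ - 1) (by linarith) (by linarith)
          rw [← h, ← h1] at this
          linarith
    refine ⟨c₁ / c₀, div_nonneg hc₁n hc₀pos.le, posSemidef_iff_dotProduct_mulVec.mpr ⟨?_, ?_⟩, ?_⟩
    · -- Hermitian
      rw [Matrix.IsHermitian, conjTranspose_eq_transpose_of_trivial, transpose_add,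
        transpose_smul, h₀, h₁]
    · -- nonneg quadratic form
      intro x
      have h2 : 0 ≤ (qf A₀ x * c₀ + qf A₁ x * c₁) / c₀ := div_nonneg (hscale x) hc₀pos.le
      have h3 : (qf A₀ x * c₀ + qf A₁ x * c₁) / c₀ = qf A₀ x + c₁ / c₀ * qf A₁ x := by
        field_simp
      rw [h3] at h2
      have h4 : star x ⬝ᵥ (A₀ + (c₁ / c₀) • A₁) *ᵥ x = qf A₀ x + c₁ / c₀ * qf A₁ x := by
        simp [qf_def2, add_mulVec, smul_mulVec, dotProduct_add, dotProduct_smul,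
          smul_eq_mul, star_trivial]
      rw [h4]
      exact h2
    · have h5 : (β₀ * c₀ + β₁ * c₁) / c₀ ≤ 0 :=
        div_nonpos_of_nonpos_of_nonneg (by linarith) hc₀pos.le
      have h6 : (β₀ * c₀ + β₁ * c₁) / c₀ = β₀ + c₁ / c₀ * β₁ := by
        field_simp
      linarith [h6 ▸ h5]
  · -- easy direction
    rintro ⟨t, ht, hpsd, hb⟩ x hx
    have h2 := hpsd.dotProduct_mulVec_nonneg x
    have h3 : star x ⬝ᵥ (A₀ + t • A₁) *ᵥ x = x ⬝ᵥ A₀ *ᵥ x + t * (x ⬝ᵥ A₁ *ᵥ x) := by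
      simp [add_mulVec, smul_mulVec, dotProduct_add, dotProduct_smul, smul_eq_mul,
        star_trivial]
    rw [h3] at h2
    nlinarith [mul_le_mul_of_nonneg_left hx ht]
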